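/- arXiv:2409.09778 — 5 statements merged into one kernel-verified Lean document; each statement's English description precedes it below -/
import Mathlib

section
/- Let f_D = (1/n)∑_{i=1}^n f_{z_i} and f_{D'} = (1/(n-m))∑_{i=1}^{n-m} f_{z_i}, where each f_{z_i} has L-Lipschitz gradient and ‖∇f_{z_i}(θ)‖ ≤ G for all θ. Let θ_t and θ'_t be gradient descent iterates with step size η on f_D and f_{D'} respectively, both starting from θ_0. Then ‖θ_t − θ'_t‖ ≤ (2Gm/(Ln))·((1 + ηLn/(n−m))^t − 1) for all t. -/
open Finset

lemma grad_smul_sum {d : ℕ} (s : Finset ℕ) (c : ℝ)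
    (f : ℕ → EuclideanSpace ℝ (Fin d) → ℝ) (hf : ∀ i, Differentiable ℝ (f i))
    (x : EuclideanSpace ℝ (Fin d)) :
    gradient (fun θ => c * ∑ i ∈ s, f i θ) x = c • ∑ i ∈ s, gradient (f i) x := by
  have hd : ∀ i ∈ s, DifferentiableAt ℝ (f i) x := fun i _ => (hf i).differentiableAt
  have h2 : fderiv ℝ (fun θ => c * ∑ i ∈ s, f i θ) x
      = c • ∑ i ∈ s, fderiv ℝ (f i) x := by
    rw [fderiv_const_mul (DifferentiableAt.fun_sum hd) c, fderiv_fun_sum hd]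
  simp only [gradient, h2, map_smul, map_sum]

lemma norm_sum_le_card_mul {E : Type*} [SeminormedAddCommGroup E] (s : Finset ℕ)
    (g : ℕ → E) (G : ℝ) (hg : ∀ i, ‖g i‖ ≤ G) :
    ‖∑ i ∈ s, g i‖ ≤ (s.card : ℝ) * G := by
  calc ‖∑ i ∈ s, g i‖ ≤ ∑ i ∈ s, ‖g i‖ := norm_sum_le _ _
    _ ≤ ∑ _i ∈ s, G := Finset.sum_le_sum fun i _ => hg i
    _ = (s.card : ℝ) * G := by simp [mul_comm]


/-- Divergence bound between gradient descent iterates on the full-data loss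
`f_D = (1/n)∑_{i<n} f_i` and the retained-data loss `f_{D'} = (1/(n-m))∑_{i<n-m} f_i`,
both started from `θ 0 = θ' 0`. -/
theorem gd_trajectory_divergence (d n m : ℕ) (hm : 1 ≤ m) (hmn : m < n)
    (fz : ℕ → EuclideanSpace ℝ (Fin d) → ℝ) (L G η : ℝ)
    (hL : 0 < L) (hG : 0 < G) (hη : 0 < η)
    (hdiff : ∀ i, Differentiable ℝ (fz i))
    (hlip : ∀ i, ∀ x y : EuclideanSpace ℝ (Fin d),
      ‖gradient (fz i) x - gradient (fz i) y‖ ≤ L * ‖x - y‖)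
    (hbdd : ∀ i, ∀ x : EuclideanSpace ℝ (Fin d), ‖gradient (fz i) x‖ ≤ G)
    (fD fD' : EuclideanSpace ℝ (Fin d) → ℝ)
    (hfD : ∀ θ, fD θ = (1 / (n : ℝ)) * ∑ i ∈ range n, fz i θ)
    (hfD' : ∀ θ, fD' θ = (1 / ((n : ℝ) - m)) * ∑ i ∈ range (n - m), fz i θ)
    (θ θ' : ℕ → EuclideanSpace ℝ (Fin d))
    (h0 : θ 0 = θ' 0)
    (hθ : ∀ t, θ (t + 1) = θ t - η • gradient fD (θ t))
    (hθ' : ∀ t, θ' (t + 1) = θ' t - η • gradient fD' (θ' t)) :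
    ∀ t : ℕ, ‖θ t - θ' t‖ ≤
      (2 * G * m / (L * n)) * ((1 + η * L * n / ((n : ℝ) - m)) ^ t - 1) := by

  have hnpos : 0 < n := lt_of_le_of_lt (Nat.zero_le m) hmn
  have hn0 : (0:ℝ) < n := by exact_mod_cast hnpos
  have hM0 : (0:ℝ) < m := by exact_mod_cast hm
  have hnm : (0:ℝ) < (n:ℝ) - m := by
    have : (m:ℝ) < n := by exact_mod_cast hmn
    linarith
  have hcast : ((n - m : ℕ) : ℝ) = (n:ℝ) - m := by
    push_cast [Nat.cast_sub hmn.le]; ring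
  -- gradient formulas
  have hgD : ∀ x, gradient fD x = (1/(n:ℝ)) • ∑ i ∈ range n, gradient (fz i) x := by
    intro x
    rw [funext hfD, grad_smul_sum _ _ _ hdiff]
  have hgD' : ∀ x, gradient fD' x
      = (1/((n:ℝ)-m)) • ∑ i ∈ range (n-m), gradient (fz i) x := by
    intro x
    rw [funext hfD', grad_smul_sum _ _ _ hdiff]
  -- Lipschitz bound for gradient of fD'
  have hlipD' : ∀ x y, ‖gradient fD' x - gradient fD' y‖ ≤ L * ‖x - y‖ := by
    intro x y
    rw [hgD' x, hgD' y, ← smul_sub, ← Finset.sum_sub_distrib, norm_smul]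
    have h1 : ‖∑ i ∈ range (n-m), (gradient (fz i) x - gradient (fz i) y)‖
        ≤ ((n-m : ℕ) : ℝ) * (L * ‖x - y‖) := by
      simpa using norm_sum_le_card_mul (range (n-m))
        (fun i => gradient (fz i) x - gradient (fz i) y) (L * ‖x - y‖)
        (fun i => hlip i x y)
    have habs : ‖(1/((n:ℝ)-m))‖ = 1/((n:ℝ)-m) := by
      rw [Real.norm_eq_abs, abs_of_pos (by positivity)]
    rw [habs, hcast] at *
    calc 1/((n:ℝ)-m) * ‖∑ i ∈ range (n-m), (gradient (fz i) x - gradient (fz i) y)‖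
        ≤ 1/((n:ℝ)-m) * (((n:ℝ)-m) * (L * ‖x - y‖)) := by
          apply mul_le_mul_of_nonneg_left _ (by positivity)
          rw [← hcast]; exact h1
      _ = L * ‖x - y‖ := by field_simp
  -- bias bound
  have hbias : ∀ x, ‖gradient fD x - gradient fD' x‖ ≤ 2*G*m/n := by
    intro x
    rw [hgD x, hgD' x]
    have hsplit : ∑ i ∈ range n, gradient (fz i) x
        = ∑ i ∈ range (n-m), gradient (fz i) x + ∑ i ∈ Ico (n-m) n, gradient (fz i) x := by
      rw [range_eq_Ico, ← Finset.sum_Ico_consecutive _ (Nat.zero_le (n-m)) (Nat.sub_le n m),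
        ← range_eq_Ico]
    set S1 := ∑ i ∈ range (n-m), gradient (fz i) x with hS1def
    set S2 := ∑ i ∈ Ico (n-m) n, gradient (fz i) x with hS2def
    have hid : (1/(n:ℝ)) • (S1 + S2) - (1/((n:ℝ)-m)) • S1
        = (1/(n:ℝ) - 1/((n:ℝ)-m)) • S1 + (1/(n:ℝ)) • S2 := by
      module
    rw [hsplit, hid]
    have hS1 : ‖S1‖ ≤ ((n:ℝ)-m) * G := by
      have := norm_sum_le_card_mul (range (n-m)) (fun i => gradient (fz i) x) G
        (fun i => hbdd i x)
      simpa [hcast] using this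
    have hS2 : ‖S2‖ ≤ (m:ℝ) * G := by
      have := norm_sum_le_card_mul (Ico (n-m) n) (fun i => gradient (fz i) x) G
        (fun i => hbdd i x)
      have hcard : ((Ico (n-m) n).card : ℝ) = (m:ℝ) := by
        rw [Nat.card_Ico, Nat.sub_sub_self hmn.le]
      rwa [hcard] at this
    have habs : |1/(n:ℝ) - 1/((n:ℝ)-m)| = 1/((n:ℝ)-m) - 1/(n:ℝ) := by
      rw [abs_of_nonpos]
      · ring
      · have : 1/(n:ℝ) ≤ 1/((n:ℝ)-m) := by
          apply one_div_le_one_div_of_le hnm; linarith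
        linarith
    have hcoef : (0:ℝ) ≤ 1/((n:ℝ)-m) - 1/(n:ℝ) := by rw [← habs]; exact abs_nonneg _
    calc ‖(1/(n:ℝ) - 1/((n:ℝ)-m)) • S1 + (1/(n:ℝ)) • S2‖
        ≤ ‖(1/(n:ℝ) - 1/((n:ℝ)-m)) • S1‖ + ‖(1/(n:ℝ)) • S2‖ := norm_add_le _ _
      _ = (1/((n:ℝ)-m) - 1/(n:ℝ)) * ‖S1‖ + (1/(n:ℝ)) * ‖S2‖ := by
          rw [norm_smul, norm_smul, Real.norm_eq_abs, Real.norm_eq_abs, habs,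
            abs_of_pos (by positivity)]
      _ ≤ (1/((n:ℝ)-m) - 1/(n:ℝ)) * (((n:ℝ)-m) * G) + (1/(n:ℝ)) * ((m:ℝ) * G) := by
          gcongr
      _ = 2*G*m/n := by field_simp; ring
  -- recurrence
  have hrec : ∀ t, ‖θ (t+1) - θ' (t+1)‖
      ≤ (1 + η*L) * ‖θ t - θ' t‖ + η * (2*G*m/n) := by
    intro t
    rw [hθ t, hθ' t]
    have hid : (θ t - η • gradient fD (θ t)) - (θ' t - η • gradient fD' (θ' t))
        = ((θ t - θ' t) - η • (gradient fD' (θ t) - gradient fD' (θ' t)))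
          - η • (gradient fD (θ t) - gradient fD' (θ t)) := by module
    rw [hid]
    have t1 : ‖(θ t - θ' t) - η • (gradient fD' (θ t) - gradient fD' (θ' t))
          - η • (gradient fD (θ t) - gradient fD' (θ t))‖
        ≤ ‖θ t - θ' t‖ + ‖η • (gradient fD' (θ t) - gradient fD' (θ' t))‖
          + ‖η • (gradient fD (θ t) - gradient fD' (θ t))‖ := by
      calc _ ≤ ‖(θ t - θ' t) - η • (gradient fD' (θ t) - gradient fD' (θ' t))‖
            + ‖η • (gradient fD (θ t) - gradient fD' (θ t))‖ := norm_sub_le _ _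
        _ ≤ _ := by
            gcongr
            exact norm_sub_le _ _
    have t2 : ‖η • (gradient fD' (θ t) - gradient fD' (θ' t))‖ ≤ η * (L * ‖θ t - θ' t‖) := by
      rw [norm_smul, Real.norm_eq_abs, abs_of_pos hη]
      exact mul_le_mul_of_nonneg_left (hlipD' _ _) hη.le
    have t3 : ‖η • (gradient fD (θ t) - gradient fD' (θ t))‖ ≤ η * (2*G*m/n) := by
      rw [norm_smul, Real.norm_eq_abs, abs_of_pos hη]
      exact mul_le_mul_of_nonneg_left (hbias _) hη.le
    calc _ ≤ _ := t1
      _ ≤ ‖θ t - θ' t‖ + η * (L * ‖θ t - θ' t‖) + η * (2*G*m/n) := by gcongr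
      _ = (1 + η*L) * ‖θ t - θ' t‖ + η * (2*G*m/n) := by ring
  -- induction
  set ρ : ℝ := 1 + η * L * n / ((n:ℝ) - m) with hρdef
  set K : ℝ := 2 * G * m / (L * n) with hKdef
  have hKpos : 0 < K := by positivity
  have hρ1 : 1 + η * L ≤ ρ := by
    rw [hρdef]
    have : η * L ≤ η * L * n / ((n:ℝ) - m) := by
      rw [le_div_iff₀ hnm]
      nlinarith [mul_pos hη hL]
    linarith
  have hρpos : (0:ℝ) < ρ := by nlinarith [mul_pos hη hL]
  have hc : η * (2*G*m/n) ≤ K * (ρ - 1) := by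
    have h1 : K * (ρ - 1) = 2*G*m*η/((n:ℝ)-m) := by
      rw [hKdef, hρdef]; field_simp; ring
    have h2 : η * (2*G*m/n) = 2*G*m*η/(n:ℝ) := by ring
    rw [h1, h2]
    exact div_le_div_of_nonneg_left (by positivity) hnm (by linarith)
  clear_value ρ K
  intro t
  induction t with
  | zero => simp [h0]
  | succ t ih =>
    have hδ0 : (0:ℝ) ≤ ‖θ t - θ' t‖ := norm_nonneg _
    calc ‖θ (t+1) - θ' (t+1)‖ ≤ (1 + η*L) * ‖θ t - θ' t‖ + η * (2*G*m/n) := hrec t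
      _ ≤ ρ * ‖θ t - θ' t‖ + η * (2*G*m/n) := by have h := mul_le_mul_of_nonneg_right hρ1 hδ0; linarith
      _ ≤ ρ * (K * (ρ^t - 1)) + η * (2*G*m/n) := by
          apply add_le_add_left
          exact mul_le_mul_of_nonneg_left ih hρpos.le
      _ ≤ ρ * (K * (ρ^t - 1)) + K * (ρ - 1) := by linarith
      _ = K * (ρ^(t+1) - 1) := by rw [pow_succ]; ring
end

section
/- For fixed T ≥ 0, η > 0, L > 0, and n > m ≥ 1, the function h(K) = ((1 + ηLn/(n−m))^{T−K} − 1)·(1 + ηL)^K is monotonically decreasing in K on [0, T]. -/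
open Real

/-- For `T ≥ 0`, `η, L > 0` and reals `n > m ≥ 1`, the function
`h(K) = ((1 + ηLn/(n-m))^(T-K) - 1) * (1 + ηL)^K` is monotonically decreasing on `[0, T]`. -/
theorem h_strictly_decreasing (T η L n m : ℝ) (hT : 0 ≤ T)
    (hη : 0 < η) (hL : 0 < L) (hm : 1 ≤ m) (hmn : m < n) :
    StrictAntiOn (fun K : ℝ =>
      ((1 + η * L * n / (n - m)) ^ (T - K) - 1) * (1 + η * L) ^ K)
      (Set.Icc 0 T) := by
  set a : ℝ := 1 + η * L * n / (n - m) with ha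
  set b : ℝ := 1 + η * L with hb
  have hnm : 0 < n - m := by linarith
  have hb1 : 1 < b := by have := mul_pos hη hL; simp [hb]; linarith
  have hab : b < a := by
    have h1 : η * L < η * L * n / (n - m) := by
      rw [lt_div_iff₀ hnm]
      have : 0 < η * L * m := by positivity
      nlinarith
    simp only [ha, hb]; linarith
  have ha1 : 1 < a := lt_trans hb1 hab
  have hla : 0 < Real.log a := Real.log_pos ha1
  have hlb : 0 < Real.log b := Real.log_pos hb1
  have hlab : Real.log b < Real.log a := Real.log_lt_log (by linarith) hab
  set la := Real.log a
  set lb := Real.log b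
  have key : StrictAnti (fun K : ℝ =>
      (Real.exp ((T - K) * la) - 1) * Real.exp (K * lb)) := by
    apply strictAnti_of_hasDerivAt_neg
      (f' := fun K => (-la * Real.exp ((T - K) * la)) * Real.exp (K * lb)
        + (Real.exp ((T - K) * la) - 1) * (lb * Real.exp (K * lb)))
    · intro x
      have h1 : HasDerivAt (fun K : ℝ => (T - K) * la) (-la) x := by
        simpa using ((hasDerivAt_id x).const_sub T).mul_const la
      have h2 : HasDerivAt (fun K : ℝ => Real.exp ((T - K) * la) - 1)
          (-la * Real.exp ((T - x) * la)) x := by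
        simpa [mul_comm] using (h1.exp.sub_const 1)
      have h3 : HasDerivAt (fun K : ℝ => Real.exp (K * lb))
          (lb * Real.exp (x * lb)) x := by
        simpa [mul_comm] using ((hasDerivAt_id x).mul_const lb).exp
      exact h2.mul h3
    · intro x
      have e1 : 0 < Real.exp ((T - x) * la) := Real.exp_pos _
      have e2 : 0 < Real.exp (x * lb) := Real.exp_pos _
      have : (-la * Real.exp ((T - x) * la))
          + (Real.exp ((T - x) * la) - 1) * lb < 0 := by nlinarith
      nlinarith
  intro x hx y hy hxy
  have heq : ∀ z : ℝ, ((a : ℝ) ^ (T - z) - 1) * b ^ z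
      = (Real.exp ((T - z) * la) - 1) * Real.exp (z * lb) := by
    intro z
    rw [Real.rpow_def_of_pos (by linarith : (0:ℝ) < a),
      Real.rpow_def_of_pos (by linarith : (0:ℝ) < b), mul_comm la, mul_comm lb]
  simpa only [heq] using key hxy
end

section
/- Suppose f is differentiable with L-Lipschitz gradient, attains a global minimum f*, and satisfies the PL inequality (1/2)‖∇f(x)‖² ≥ μ(f(x) − f*) for all x with μ > 0. Then gradient descent with step size 0 < η ≤ 1/L satisfies f(θ_t) − f* ≤ (1 − ημ)^t (f(θ_0) − f*). -/
open InnerProductSpace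

section aux

variable {d : ℕ}

local notation "⟪" x ", " y "⟫" => @inner ℝ _ _ x y

lemma gd_aux_hasDerivAt (f : EuclideanSpace ℝ (Fin d) → ℝ)
    (hdiff : Differentiable ℝ f) (x v : EuclideanSpace ℝ (Fin d)) (t : ℝ) :
    HasDerivAt (fun s : ℝ => f (x + s • v)) ⟪gradient f (x + t • v), v⟫ t := by
  have hc : HasDerivAt (fun s : ℝ => x + s • v) v t :=
    by simpa using ((hasDerivAt_id t).smul_const v).const_add x
  have hf : HasFDerivAt f (toDual ℝ _ (gradient f (x + t • v))) (x + t • v) :=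
    (hasGradientAt_iff_hasFDerivAt).1 (hdiff _).hasGradientAt
  exact hf.comp_hasDerivAt t hc

/-- Descent lemma for L-smooth functions. -/
lemma gd_descent_lemma (f : EuclideanSpace ℝ (Fin d) → ℝ) (L : ℝ) (hL : 0 < L)
    (hdiff : Differentiable ℝ f)
    (hlip : ∀ x y : EuclideanSpace ℝ (Fin d),
      ‖gradient f x - gradient f y‖ ≤ L * ‖x - y‖)
    (x v : EuclideanSpace ℝ (Fin d)) :
    f (x + v) ≤ f x + ⟪gradient f x, v⟫ + L / 2 * ‖v‖ ^ 2 := by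
  set φ : ℝ → ℝ := fun t =>
    f (x + t • v) - t * ⟪gradient f x, v⟫ - L / 2 * t ^ 2 * ‖v‖ ^ 2 with hφ
  have hderiv : ∀ t : ℝ, HasDerivAt φ
      (⟪gradient f (x + t • v), v⟫ - ⟪gradient f x, v⟫ - L * t * ‖v‖ ^ 2) t := by
    intro t
    have h1 := gd_aux_hasDerivAt f hdiff x v t
    have h2 : HasDerivAt (fun s : ℝ => s * ⟪gradient f x, v⟫)
        (⟪gradient f x, v⟫) t := by
      simpa using (hasDerivAt_id t).mul_const ⟪gradient f x, v⟫
    have h3 : HasDerivAt (fun s : ℝ => L / 2 * s ^ 2 * ‖v‖ ^ 2)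
        (L * t * ‖v‖ ^ 2) t := by
      have := ((hasDerivAt_pow 2 t).const_mul (L / 2)).mul_const (‖v‖ ^ 2)
      refine this.congr_deriv ?_
      rw [show (2:ℕ) - 1 = 1 from rfl]; push_cast; ring
    exact (h1.sub h2).sub h3
  have hcont : Continuous φ := by
    rw [continuous_iff_continuousAt]; intro t; exact (hderiv t).continuousAt
  have hnonpos : ∀ t ∈ Set.Ioo (0:ℝ) 1, deriv φ t ≤ 0 := by
    intro t ht
    rw [(hderiv t).deriv]
    have h1 : ⟪gradient f (x + t • v), v⟫ - ⟪gradient f x, v⟫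
        = ⟪gradient f (x + t • v) - gradient f x, v⟫ := by
      rw [inner_sub_left]
    rw [h1]
    have h2 : ⟪gradient f (x + t • v) - gradient f x, v⟫
        ≤ ‖gradient f (x + t • v) - gradient f x‖ * ‖v‖ := real_inner_le_norm _ _
    have h3 : ‖gradient f (x + t • v) - gradient f x‖ ≤ L * (t * ‖v‖) := by
      have := hlip (x + t • v) x
      simpa [norm_smul, abs_of_pos ht.1] using this
    nlinarith [norm_nonneg v, ht.1.le]
  have hanti : AntitoneOn φ (Set.Icc (0:ℝ) 1) := by
    apply antitoneOn_of_deriv_nonpos (convex_Icc 0 1) (hcont.continuousOn)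
    · intro t _; exact ((hderiv t).differentiableAt).differentiableWithinAt
    · intro t ht
      rw [interior_Icc] at ht
      exact hnonpos t ht
  have := hanti (Set.left_mem_Icc.2 zero_le_one) (Set.right_mem_Icc.2 zero_le_one)
    zero_le_one
  simp only [hφ] at this
  simp only [zero_smul, one_smul, add_zero] at this
  nlinarith [this]

end aux

/-- Linear convergence of gradient descent on an `L`-smooth function satisfying
the Polyak–Łojasiewicz inequality with constant `μ`. -/
theorem gd_linear_convergence_PL (d : ℕ) (f : EuclideanSpace ℝ (Fin d) → ℝ)
    (L μ η fstar : ℝ) (hL : 0 < L) (hμ : 0 < μ) (hη : 0 < η) (hηL : η ≤ 1 / L)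
    (hdiff : Differentiable ℝ f)
    (hlip : ∀ x y : EuclideanSpace ℝ (Fin d),
      ‖gradient f x - gradient f y‖ ≤ L * ‖x - y‖)
    (hmin : ∃ x0 : EuclideanSpace ℝ (Fin d), f x0 = fstar)
    (hlb : ∀ x : EuclideanSpace ℝ (Fin d), fstar ≤ f x)
    (hPL : ∀ x : EuclideanSpace ℝ (Fin d),
      μ * (f x - fstar) ≤ (1 / 2) * ‖gradient f x‖ ^ 2)
    (θ : ℕ → EuclideanSpace ℝ (Fin d))
    (hθ : ∀ t, θ (t + 1) = θ t - η • gradient f (θ t)) :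
    ∀ t : ℕ, f (θ t) - fstar ≤ (1 - η * μ) ^ t * (f (θ 0) - fstar) := by
  have hηL' : η * L ≤ 1 := by
    rw [div_eq_mul_inv, one_mul] at hηL
    calc η * L ≤ L⁻¹ * L := by nlinarith
    _ = 1 := inv_mul_cancel₀ hL.ne'
  -- one-step contraction
  have key : ∀ x : EuclideanSpace ℝ (Fin d),
      f (x - η • gradient f x) - fstar ≤ (1 - η * μ) * (f x - fstar) := by
    intro x
    set g := gradient f x with hg
    have hd := gd_descent_lemma f L hL hdiff hlip x (-(η • g))
    have e1 : x + -(η • g) = x - η • g := by abel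
    have e2 : (inner ℝ g (-(η • g)) : ℝ) = -(η * ‖g‖ ^ 2) := by
      rw [inner_neg_right, real_inner_smul_right, real_inner_self_eq_norm_sq]
    have e3 : ‖-(η • g)‖ ^ 2 = η ^ 2 * ‖g‖ ^ 2 := by
      rw [norm_neg, norm_smul, mul_pow, Real.norm_eq_abs, sq_abs]
    rw [e1, e2, e3] at hd
    have hpl := hPL x
    nlinarith [sq_nonneg ‖g‖, hη.le]
  -- nonnegativity of the contraction factor in the relevant cases
  intro t
  by_cases hex : ∃ x, fstar < f x
  · obtain ⟨x, hx⟩ := hex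
    have hfac : 0 ≤ 1 - η * μ := by
      have h1 := key x
      have h2 := hlb (x - η • gradient f x)
      nlinarith
    induction t with
    | zero => simp
    | succ n ih =>
      have h1 : f (θ (n + 1)) - fstar ≤ (1 - η * μ) * (f (θ n) - fstar) := by
        rw [hθ n]; exact key (θ n)
      calc f (θ (n + 1)) - fstar ≤ (1 - η * μ) * (f (θ n) - fstar) := h1
        _ ≤ (1 - η * μ) * ((1 - η * μ) ^ n * (f (θ 0) - fstar)) :=
            mul_le_mul_of_nonneg_left ih hfac
        _ = (1 - η * μ) ^ (n + 1) * (f (θ 0) - fstar) := by ring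
  · push_neg at hex
    have hall : ∀ x, f x = fstar := fun x => le_antisymm (hex x) (hlb x)
    simp [hall]
end

section
/- Combining both phases: under the PL condition with constant μ on f_{D'}, after T−K gradient descent steps on f_D satisfying f_{D'}(θ_{t+1}) − f* ≤ (1 − ημ(n−m)/n)(f_{D'}(θ_t) − f*) + c (with c = ηG²m/n + Lη²Gm/n) followed by K gradient descent steps on f_{D'} with step size η ≤ 1/L, the final iterate θ''_K satisfies f_{D'}(θ''_K) − f* ≤ (1 − ημ(n−m)/n)^{T−K}(1 − ημ)^K (f_{D'}(θ_0) − f*) + (1 − ημ)^K (G²m + LηGm)/(μ(n−m)). -/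
open intervalIntegral

variable {E : Type*} [NormedAddCommGroup E] [InnerProductSpace ℝ E] [CompleteSpace E]

lemma descent_lemma (f : E → ℝ) (L : ℝ) (hL : 0 < L) (hd : Differentiable ℝ f)
    (hlip : ∀ x y, ‖gradient f x - gradient f y‖ ≤ L * ‖x - y‖) (x v : E) :
    f (x + v) ≤ f x + inner ℝ (gradient f x) v + L / 2 * ‖v‖ ^ 2 := by
  set g : ℝ → ℝ := fun t => f (x + t • v) with hg
  have hct : Continuous (gradient f) := by
    have : LipschitzWith ⟨L, hL.le⟩ (gradient f) :=
      LipschitzWith.of_dist_le_mul (fun x y => by rw [dist_eq_norm, dist_eq_norm]; exact hlip x y)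
    exact this.continuous
  have hderiv : ∀ t : ℝ, HasDerivAt g (inner ℝ (gradient f (x + t • v)) v) t := by
    intro t
    have hline : HasDerivAt (fun t : ℝ => x + t • v) v t := by
      simpa using ((hasDerivAt_id t).smul_const v).const_add x
    have hgrad := (hd (x + t • v)).hasGradientAt
    exact hgrad.hasFDerivAt.comp_hasDerivAt t hline
  have hlinec : Continuous fun t : ℝ => x + t • v := by continuity
  have hcont : Continuous fun t : ℝ => (inner ℝ (gradient f (x + t • v)) v : ℝ) :=
    (hct.comp hlinec).inner continuous_const
  have hFTC : ∫ t in (0:ℝ)..1, inner ℝ (gradient f (x + t • v)) v = f (x + v) - f x := by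
    have := intervalIntegral.integral_eq_sub_of_hasDerivAt
      (fun t _ => hderiv t) (hcont.intervalIntegrable 0 1)
    simpa [hg] using this
  have hbound : ∫ t in (0:ℝ)..1, inner ℝ (gradient f (x + t • v)) v
      ≤ ∫ t in (0:ℝ)..1, (inner ℝ (gradient f x) v + L * t * ‖v‖ ^ 2) := by
    apply intervalIntegral.integral_mono_on (by norm_num)
      (hcont.intervalIntegrable 0 1)
      ((by continuity : Continuous fun t : ℝ => inner ℝ (gradient f x) v + L * t * ‖v‖ ^ 2).intervalIntegrable 0 1)
    intro t ht
    have h1 : (inner ℝ (gradient f (x + t • v)) v : ℝ) - inner ℝ (gradient f x) v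
        = inner ℝ (gradient f (x + t • v) - gradient f x) v := by
      rw [inner_sub_left]
    have h2 : (inner ℝ (gradient f (x + t • v) - gradient f x) v : ℝ)
        ≤ ‖gradient f (x + t • v) - gradient f x‖ * ‖v‖ :=
      real_inner_le_norm _ _
    have h3 : ‖gradient f (x + t • v) - gradient f x‖ ≤ L * (t * ‖v‖) := by
      have := hlip (x + t • v) x
      simpa [norm_smul, abs_of_nonneg ht.1] using this
    nlinarith [norm_nonneg v, mul_le_mul_of_nonneg_right h3 (norm_nonneg v)]
  have hval : ∫ t in (0:ℝ)..1, (inner ℝ (gradient f x) v + L * t * ‖v‖ ^ 2)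
      = inner ℝ (gradient f x) v + L / 2 * ‖v‖ ^ 2 := by
    rw [intervalIntegral.integral_add ((continuous_const (y := (inner ℝ (gradient f x) v : ℝ))).intervalIntegrable 0 1)
      ((by continuity : Continuous fun t : ℝ => L * t * ‖v‖ ^ 2).intervalIntegrable 0 1)]
    have : ∫ t in (0:ℝ)..1, L * t * ‖v‖ ^ 2 = L / 2 * ‖v‖ ^ 2 := by
      have : ∀ t : ℝ, L * t * ‖v‖ ^ 2 = (L * ‖v‖ ^ 2) * t := fun t => by ring
      simp only [this]
      rw [intervalIntegral.integral_const_mul, integral_id]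
      ring
    simp [this]
  linarith [hFTC ▸ hbound, hval ▸ hbound]

lemma PL_step (f : E → ℝ) (μ L η fstar : ℝ) (hμ : 0 < μ) (hL : 0 < L) (hη : 0 < η)
    (hηL : η ≤ 1 / L) (hd : Differentiable ℝ f)
    (hlip : ∀ x y, ‖gradient f x - gradient f y‖ ≤ L * ‖x - y‖)
    (hPL : ∀ x, μ * (f x - fstar) ≤ (1 / 2) * ‖gradient f x‖ ^ 2) (x : E) :
    f (x - η • gradient f x) - fstar ≤ (1 - η * μ) * (f x - fstar) := by
  set g := gradient f x with hgdef
  have hdesc := descent_lemma f L hL hd hlip x (-(η • g))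
  have hx : x + -(η • g) = x - η • g := by abel
  have hin : (inner ℝ g (-(η • g)) : ℝ) = -(η * ‖g‖ ^ 2) := by
    rw [inner_neg_right, real_inner_smul_right, real_inner_self_eq_norm_sq]
  have hnrm : ‖-(η • g)‖ ^ 2 = η ^ 2 * ‖g‖ ^ 2 := by
    rw [norm_neg, norm_smul]
    rw [Real.norm_eq_abs, abs_of_nonneg hη.le]
    ring
  rw [hx, hin, hnrm] at hdesc
  have hLη : L * η ≤ 1 := by
    rw [le_div_iff₀ hL] at hηL; linarith
  have hPLx := hPL x
  nlinarith [sq_nonneg ‖g‖, sq_nonneg η, mul_pos hη hη]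

/-- Two-phase bound: `T - K` gradient descent steps on the full-data loss
(satisfying the per-step mixed-dataset PL inequality) followed by `K` gradient
descent steps on the retained-data loss `f_{D'}` (which is `L`-smooth and
`μ`-PL with minimum `f*`). -/
theorem two_phase_PL_bound (d n m T K : ℕ) (hm : 1 ≤ m) (hmn : m < n) (hKT : K ≤ T)
    (fD' : EuclideanSpace ℝ (Fin d) → ℝ)
    (μ L G η fstar : ℝ) (hμ : 0 < μ) (hL : 0 < L) (hG : 0 < G) (hη : 0 < η)
    (hηL : η ≤ 1 / L) (hημ : η * μ < 1)
    (hdiff : Differentiable ℝ fD')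
    (hlip : ∀ x y : EuclideanSpace ℝ (Fin d),
      ‖gradient fD' x - gradient fD' y‖ ≤ L * ‖x - y‖)
    (hlb : ∀ x : EuclideanSpace ℝ (Fin d), fstar ≤ fD' x)
    (hPL : ∀ x : EuclideanSpace ℝ (Fin d),
      μ * (fD' x - fstar) ≤ (1 / 2) * ‖gradient fD' x‖ ^ 2)
    (θ θ'' : ℕ → EuclideanSpace ℝ (Fin d))
    (hphase1 : ∀ t, fD' (θ (t + 1)) - fstar ≤
      (1 - η * μ * ((n : ℝ) - m) / n) * (fD' (θ t) - fstar)
        + η * G ^ 2 * m / n + L * η ^ 2 * G * m / n)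
    (hinit : θ'' 0 = θ (T - K))
    (hphase2 : ∀ t, θ'' (t + 1) = θ'' t - η • gradient fD' (θ'' t)) :
    fD' (θ'' K) - fstar ≤
      (1 - η * μ * ((n : ℝ) - m) / n) ^ (T - K) * (1 - η * μ) ^ K * (fD' (θ 0) - fstar)
        + (1 - η * μ) ^ K * (G ^ 2 * m + L * η * G * m) / (μ * ((n : ℝ) - m)) := by
  have hn : (0:ℝ) < n := by exact_mod_cast (by omega : 0 < n)
  have hnm : (0:ℝ) < (n:ℝ) - m := by
    have : (m:ℝ) < n := by exact_mod_cast hmn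
    linarith
  set a : ℝ := 1 - η * μ * ((n : ℝ) - m) / n with ha
  set C : ℝ := (G ^ 2 * m + L * η * G * m) / (μ * ((n : ℝ) - m)) with hC
  have hfrac : ((n:ℝ) - m) / n ≤ 1 := by
    rw [div_le_one hn]
    have : (0:ℝ) ≤ (m:ℝ) := by positivity
    linarith
  have hμη : 0 < η * μ := mul_pos hη hμ
  have ha0 : 0 ≤ a := by
    have : η * μ * ((n:ℝ) - m) / n ≤ η * μ * 1 := by
      rw [mul_div_assoc]
      exact mul_le_mul_of_nonneg_left hfrac hμη.le
    simp only [mul_one] at this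
    simp only [ha]; linarith
  have hb0 : 0 ≤ 1 - η * μ := by linarith
  have hC0 : 0 ≤ C := by
    apply div_nonneg _ (mul_pos hμ hnm).le
    positivity
  have hkey : a * C + (η * G ^ 2 * m / n + L * η ^ 2 * G * m / n) = C := by
    simp only [ha, hC]
    field_simp
    ring
  -- Phase 1
  have hph1 : ∀ t, fD' (θ t) - fstar ≤ a ^ t * (fD' (θ 0) - fstar) + C := by
    intro t
    induction t with
    | zero => simp; linarith
    | succ t ih =>
      have h1 := hphase1 t
      calc fD' (θ (t+1)) - fstar ≤ a * (fD' (θ t) - fstar)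
            + η * G ^ 2 * m / n + L * η ^ 2 * G * m / n := h1
        _ ≤ a * (a ^ t * (fD' (θ 0) - fstar) + C)
            + η * G ^ 2 * m / n + L * η ^ 2 * G * m / n := by
            gcongr
        _ = a ^ (t+1) * (fD' (θ 0) - fstar) + (a * C + (η * G ^ 2 * m / n + L * η ^ 2 * G * m / n)) := by ring
        _ = a ^ (t+1) * (fD' (θ 0) - fstar) + C := by rw [hkey]
  -- Phase 2
  have hph2 : ∀ t, fD' (θ'' t) - fstar ≤ (1 - η * μ) ^ t * (fD' (θ'' 0) - fstar) := by
    intro t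
    induction t with
    | zero => simp
    | succ t ih =>
      have hstep := PL_step fD' μ L η fstar hμ hL hη hηL hdiff hlip hPL (θ'' t)
      rw [← hphase2 t] at hstep
      calc fD' (θ'' (t+1)) - fstar ≤ (1 - η * μ) * (fD' (θ'' t) - fstar) := hstep
        _ ≤ (1 - η * μ) * ((1 - η * μ) ^ t * (fD' (θ'' 0) - fstar)) :=
            mul_le_mul_of_nonneg_left ih hb0
        _ = (1 - η * μ) ^ (t+1) * (fD' (θ'' 0) - fstar) := by ring
  have h2 := hph2 K
  have h1 := hph1 (T - K)
  rw [hinit] at h2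
  have hbK : 0 ≤ (1 - η * μ) ^ K := pow_nonneg hb0 K
  have := mul_le_mul_of_nonneg_left h1 hbK
  calc fD' (θ'' K) - fstar ≤ (1 - η * μ) ^ K * (fD' (θ (T - K)) - fstar) := h2
    _ ≤ (1 - η * μ) ^ K * (a ^ (T - K) * (fD' (θ 0) - fstar) + C) := this
    _ = a ^ (T - K) * (1 - η * μ) ^ K * (fD' (θ 0) - fstar)
        + (1 - η * μ) ^ K * (G ^ 2 * m + L * η * G * m) / (μ * ((n : ℝ) - m)) := by
        simp only [hC]; ring
end

section
/- Under the assumptions of the unlearning theorem (each f_z with L-Lipschitz gradient and ‖∇f_z‖ ≤ G, step size η ≤ min{1/L, n/(2(n−m)L)}), the noiseless outputs satisfy ‖θ'_T − θ''_K‖ ≤ (2mG/(Ln))·((1 + ηLn/(n−m))^{T−K} − 1)·(1 + ηL)^K, where θ'_T is the retraining output (T gradient descent steps on f_{D'} from θ_0) and θ''_K is the unlearning output (T−K steps on f_D from θ_0 followed by K steps on f_{D'}). -/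
open Finset InnerProductSpace

lemma gradient_avg' {d : ℕ} (N : ℕ) (c : ℝ) (fz : ℕ → EuclideanSpace ℝ (Fin d) → ℝ)
    (hdiff : ∀ i, Differentiable ℝ (fz i)) (f : EuclideanSpace ℝ (Fin d) → ℝ)
    (hf : ∀ x, f x = c * ∑ i ∈ range N, fz i x) (x : EuclideanSpace ℝ (Fin d)) :
    gradient f x = c • ∑ i ∈ range N, gradient (fz i) x := by
  have hfe : f = fun y => c * ∑ i ∈ range N, fz i y := funext hf
  rw [hfe]
  apply HasGradientAt.gradient
  rw [hasGradientAt_iff_hasFDerivAt]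
  have h : HasFDerivAt (fun y => c * ∑ i ∈ range N, fz i y)
      (c • ∑ i ∈ range N, fderiv ℝ (fz i) x) x :=
    (HasFDerivAt.fun_sum (fun i _ => ((hdiff i) x).hasFDerivAt)).const_mul c
  refine h.congr_fderiv ?_
  symm
  rw [map_smul, map_sum]
  congr 1
  refine Finset.sum_congr rfl fun i _ => ?_
  simp [gradient]

set_option maxHeartbeats 1000000

/-- Sensitivity bound for the rewind-to-delete algorithm: the distance between
the retraining output `θ' T` and the noiseless unlearning output `θ'' K`. -/
theorem unlearning_sensitivity_bound (d n m T K : ℕ) (hm : 1 ≤ m) (hmn : m < n)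
    (hKT : K ≤ T)
    (fz : ℕ → EuclideanSpace ℝ (Fin d) → ℝ) (L G η : ℝ)
    (hL : 0 < L) (hG : 0 < G) (hη : 0 < η)
    (hηmin : η ≤ min (1 / L) ((n : ℝ) / (2 * ((n : ℝ) - m) * L)))
    (hdiff : ∀ i, Differentiable ℝ (fz i))
    (hlip : ∀ i, ∀ x y : EuclideanSpace ℝ (Fin d),
      ‖gradient (fz i) x - gradient (fz i) y‖ ≤ L * ‖x - y‖)
    (hbdd : ∀ i, ∀ x : EuclideanSpace ℝ (Fin d), ‖gradient (fz i) x‖ ≤ G)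
    (fD fD' : EuclideanSpace ℝ (Fin d) → ℝ)
    (hfD : ∀ x, fD x = (1 / (n : ℝ)) * ∑ i ∈ range n, fz i x)
    (hfD' : ∀ x, fD' x = (1 / ((n : ℝ) - m)) * ∑ i ∈ range (n - m), fz i x)
    (θ θ' θ'' : ℕ → EuclideanSpace ℝ (Fin d))
    (h0 : θ 0 = θ' 0)
    (hθ : ∀ t, θ (t + 1) = θ t - η • gradient fD (θ t))
    (hθ' : ∀ t, θ' (t + 1) = θ' t - η • gradient fD' (θ' t))
    (hinit : θ'' 0 = θ (T - K))
    (hθ'' : ∀ t, θ'' (t + 1) = θ'' t - η • gradient fD' (θ'' t)) :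
    ‖θ' T - θ'' K‖ ≤
      (2 * m * G / (L * n)) * ((1 + η * L * n / ((n : ℝ) - m)) ^ (T - K) - 1)
        * (1 + η * L) ^ K := by
  have hn0 : (0:ℝ) < n := by have h : 0 < n := Nat.lt_of_lt_of_le (Nat.lt_of_lt_of_le Nat.zero_lt_one hm) hmn.le; exact_mod_cast h
  have hm0 : (0:ℝ) < m := by exact_mod_cast hm
  have hnm0 : (0:ℝ) < (n:ℝ) - m := by
    have : (m:ℝ) < n := by exact_mod_cast hmn
    linarith
  have hcast : ((n - m : ℕ) : ℝ) = (n:ℝ) - m := by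
    rw [Nat.cast_sub hmn.le]
  -- gradients of the averages
  have hgD : ∀ x, gradient fD x = (1/(n:ℝ)) • ∑ i ∈ range n, gradient (fz i) x :=
    fun x => gradient_avg' n _ fz hdiff fD hfD x
  have hgD' : ∀ x, gradient fD' x
      = (1/((n:ℝ)-m)) • ∑ i ∈ range (n - m), gradient (fz i) x :=
    fun x => gradient_avg' (n - m) _ fz hdiff fD' hfD' x
  -- Lipschitz property of average gradients
  have lip_avg : ∀ (N : ℕ) (x y : EuclideanSpace ℝ (Fin d)),
      ‖(1/(N:ℝ)) • ∑ i ∈ range N, gradient (fz i) x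
        - (1/(N:ℝ)) • ∑ i ∈ range N, gradient (fz i) y‖ ≤ L * ‖x - y‖ := by
    intro N x y
    rcases Nat.eq_zero_or_pos N with h | h
    · subst h; simp; positivity
    have hN : (0:ℝ) < N := by exact_mod_cast h
    rw [← smul_sub, ← Finset.sum_sub_distrib, norm_smul]
    have hsum : ‖∑ i ∈ range N, (gradient (fz i) x - gradient (fz i) y)‖
        ≤ (N:ℝ) * (L * ‖x - y‖) := by
      calc ‖∑ i ∈ range N, (gradient (fz i) x - gradient (fz i) y)‖
          ≤ ∑ i ∈ range N, ‖gradient (fz i) x - gradient (fz i) y‖ :=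
            norm_sum_le _ _
        _ ≤ ∑ _i ∈ range N, (L * ‖x - y‖) :=
            Finset.sum_le_sum fun i _ => hlip i x y
        _ = (N:ℝ) * (L * ‖x - y‖) := by simp [mul_comm]
    have : ‖(1/(N:ℝ))‖ = 1/(N:ℝ) := by
      rw [Real.norm_eq_abs, abs_of_pos]; positivity
    rw [this]
    calc (1/(N:ℝ)) * ‖∑ i ∈ range N, (gradient (fz i) x - gradient (fz i) y)‖
        ≤ (1/(N:ℝ)) * ((N:ℝ) * (L * ‖x - y‖)) := by
          apply mul_le_mul_of_nonneg_left hsum; positivity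
      _ = L * ‖x - y‖ := by field_simp
  have hlipD : ∀ x y, ‖gradient fD x - gradient fD y‖ ≤ L * ‖x - y‖ := by
    intro x y; rw [hgD, hgD]; exact lip_avg n x y
  have hlipD' : ∀ x y, ‖gradient fD' x - gradient fD' y‖ ≤ L * ‖x - y‖ := by
    intro x y
    rw [hgD', hgD']
    have := lip_avg (n - m) x y
    rwa [hcast] at this
  -- bound on gradient difference
  have hdiffb : ∀ x, ‖gradient fD x - gradient fD' x‖ ≤ 2 * m * G / n := by
    intro x
    rw [hgD, hgD']
    set g : ℕ → EuclideanSpace ℝ (Fin d) := fun i => gradient (fz i) x with hg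
    have hsplit : ∑ i ∈ range n, g i
        = ∑ i ∈ range (n - m), g i + ∑ i ∈ Finset.Ico (n - m) n, g i := by
      rw [Finset.range_eq_Ico, ← Finset.sum_Ico_consecutive _ (Nat.zero_le _) (Nat.sub_le n m), Finset.range_eq_Ico]
    set A := ∑ i ∈ range (n - m), g i
    set B := ∑ i ∈ Finset.Ico (n - m) n, g i
    have hA : ‖A‖ ≤ ((n:ℝ) - m) * G := by
      calc ‖A‖ ≤ ∑ i ∈ range (n - m), ‖g i‖ := norm_sum_le _ _
        _ ≤ ∑ _i ∈ range (n - m), G := Finset.sum_le_sum fun i _ => hbdd i x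
        _ = ((n:ℝ) - m) * G := by rw [Finset.sum_const, Finset.card_range,
              nsmul_eq_mul, hcast]
    have hB : ‖B‖ ≤ (m:ℝ) * G := by
      calc ‖B‖ ≤ ∑ i ∈ Finset.Ico (n - m) n, ‖g i‖ := norm_sum_le _ _
        _ ≤ ∑ _i ∈ Finset.Ico (n - m) n, G := Finset.sum_le_sum fun i _ => hbdd i x
        _ = (m:ℝ) * G := by
            rw [Finset.sum_const, Nat.card_Ico, nsmul_eq_mul,
              Nat.sub_sub_self hmn.le]
    have key : (1/(n:ℝ)) • ∑ i ∈ range n, g i - (1/((n:ℝ)-m)) • A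
        = (1/(n:ℝ)) • B + ((1/(n:ℝ)) - (1/((n:ℝ)-m))) • A := by
      rw [hsplit, smul_add, sub_smul]
      abel
    rw [key]
    calc ‖(1/(n:ℝ)) • B + ((1/(n:ℝ)) - (1/((n:ℝ)-m))) • A‖
        ≤ ‖(1/(n:ℝ)) • B‖ + ‖((1/(n:ℝ)) - (1/((n:ℝ)-m))) • A‖ := norm_add_le _ _
      _ = (1/(n:ℝ)) * ‖B‖ + ((1/((n:ℝ)-m)) - (1/(n:ℝ))) * ‖A‖ := by
          rw [norm_smul, norm_smul, Real.norm_eq_abs, Real.norm_eq_abs,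
            abs_of_pos (by positivity), abs_of_nonpos, neg_sub]
          have h1 : (1/(n:ℝ)) ≤ 1/((n:ℝ)-m) := by
            apply one_div_le_one_div_of_le hnm0; linarith
          linarith
      _ ≤ (1/(n:ℝ)) * ((m:ℝ) * G) + ((1/((n:ℝ)-m)) - (1/(n:ℝ))) * (((n:ℝ)-m) * G) := by
          have h1 : (0:ℝ) ≤ 1/(n:ℝ) := by positivity
          have h2 : (0:ℝ) ≤ (1/((n:ℝ)-m)) - (1/(n:ℝ)) := by
            have : (1/(n:ℝ)) ≤ 1/((n:ℝ)-m) := by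
              apply one_div_le_one_div_of_le hnm0; linarith
            linarith
          gcongr
      _ = 2 * m * G / n := by field_simp; ring
  -- phase 1
  set C : ℝ := 2 * m * G / (L * n) with hC
  have hC0 : 0 ≤ C := by positivity
  have hq1 : (1:ℝ) ≤ 1 + η * L := by nlinarith
  have phase1 : ∀ t, ‖θ t - θ' t‖ ≤ C * ((1 + η * L) ^ t - 1) := by
    intro t
    induction t with
    | zero => simp [h0]
    | succ t ih =>
      have step : θ (t+1) - θ' (t+1)
          = (θ t - θ' t) - η • (gradient fD (θ t) - gradient fD (θ' t))
            - η • (gradient fD (θ' t) - gradient fD' (θ' t)) := by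
        rw [hθ t, hθ' t, smul_sub, smul_sub]
        abel
      have hb : ‖θ (t+1) - θ' (t+1)‖
          ≤ (1 + η * L) * ‖θ t - θ' t‖ + η * (2 * m * G / n) := by
        rw [step]
        calc ‖(θ t - θ' t) - η • (gradient fD (θ t) - gradient fD (θ' t))
              - η • (gradient fD (θ' t) - gradient fD' (θ' t))‖
            ≤ ‖(θ t - θ' t) - η • (gradient fD (θ t) - gradient fD (θ' t))‖
              + ‖η • (gradient fD (θ' t) - gradient fD' (θ' t))‖ := norm_sub_le _ _
          _ ≤ ‖θ t - θ' t‖ + ‖η • (gradient fD (θ t) - gradient fD (θ' t))‖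
              + ‖η • (gradient fD (θ' t) - gradient fD' (θ' t))‖ := by
              gcongr; exact norm_sub_le _ _
          _ ≤ ‖θ t - θ' t‖ + η * (L * ‖θ t - θ' t‖) + η * (2 * m * G / n) := by
              rw [norm_smul, norm_smul, Real.norm_eq_abs, abs_of_pos hη]
              gcongr
              · exact hlipD _ _
              · exact hdiffb _
          _ = (1 + η * L) * ‖θ t - θ' t‖ + η * (2 * m * G / n) := by ring
      have alg : (1 + η * L) * (C * ((1 + η * L) ^ t - 1)) + η * (2 * m * G / n)
          = C * ((1 + η * L) ^ (t+1) - 1) := by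
        rw [hC, pow_succ]
        field_simp
        ring
      calc ‖θ (t+1) - θ' (t+1)‖
          ≤ (1 + η * L) * ‖θ t - θ' t‖ + η * (2 * m * G / n) := hb
        _ ≤ (1 + η * L) * (C * ((1 + η * L) ^ t - 1)) + η * (2 * m * G / n) := by
            gcongr
        _ = C * ((1 + η * L) ^ (t+1) - 1) := alg
  -- phase 2
  have phase2 : ∀ t, ‖θ' (T - K + t) - θ'' t‖
      ≤ (1 + η * L) ^ t * ‖θ (T - K) - θ' (T - K)‖ := by
    intro t
    induction t with
    | zero => simp [hinit, norm_sub_rev]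
    | succ t ih =>
      have step : θ' (T - K + (t+1)) - θ'' (t+1)
          = (θ' (T - K + t) - θ'' t)
            - η • (gradient fD' (θ' (T - K + t)) - gradient fD' (θ'' t)) := by
        have e : T - K + (t+1) = (T - K + t) + 1 := by omega
        rw [e, hθ' (T - K + t), hθ'' t, smul_sub]
        abel
      have hb : ‖θ' (T - K + (t+1)) - θ'' (t+1)‖
          ≤ (1 + η * L) * ‖θ' (T - K + t) - θ'' t‖ := by
        rw [step]
        calc ‖(θ' (T - K + t) - θ'' t)
              - η • (gradient fD' (θ' (T - K + t)) - gradient fD' (θ'' t))‖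
            ≤ ‖θ' (T - K + t) - θ'' t‖
              + ‖η • (gradient fD' (θ' (T - K + t)) - gradient fD' (θ'' t))‖ :=
              norm_sub_le _ _
          _ ≤ ‖θ' (T - K + t) - θ'' t‖ + η * (L * ‖θ' (T - K + t) - θ'' t‖) := by
              rw [norm_smul, Real.norm_eq_abs, abs_of_pos hη]
              gcongr
              exact hlipD' _ _
          _ = (1 + η * L) * ‖θ' (T - K + t) - θ'' t‖ := by ring
      calc ‖θ' (T - K + (t+1)) - θ'' (t+1)‖
          ≤ (1 + η * L) * ‖θ' (T - K + t) - θ'' t‖ := hb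
        _ ≤ (1 + η * L) * ((1 + η * L) ^ t * ‖θ (T - K) - θ' (T - K)‖) := by
            gcongr
        _ = (1 + η * L) ^ (t+1) * ‖θ (T - K) - θ' (T - K)‖ := by ring
  -- combine
  have hT : T - K + K = T := Nat.sub_add_cancel hKT
  have hfinal : ‖θ' T - θ'' K‖
      ≤ (1 + η * L) ^ K * (C * ((1 + η * L) ^ (T - K) - 1)) := by
    have := phase2 K
    rw [hT] at this
    calc ‖θ' T - θ'' K‖ ≤ (1 + η * L) ^ K * ‖θ (T - K) - θ' (T - K)‖ := this
      _ ≤ (1 + η * L) ^ K * (C * ((1 + η * L) ^ (T - K) - 1)) := by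
          gcongr
          exact phase1 (T - K)
  have hQ : (1 + η * L) ≤ 1 + η * L * n / ((n:ℝ) - m) := by
    have h1 : η * L ≤ η * L * n / ((n:ℝ) - m) := by
      rw [le_div_iff₀ hnm0]
      nlinarith
    linarith
  have hpow : (1 + η * L) ^ (T - K) ≤ (1 + η * L * n / ((n:ℝ) - m)) ^ (T - K) := by
    apply pow_le_pow_left₀ (by linarith) hQ
  calc ‖θ' T - θ'' K‖
      ≤ (1 + η * L) ^ K * (C * ((1 + η * L) ^ (T - K) - 1)) := hfinal
    _ ≤ (1 + η * L) ^ K * (C * ((1 + η * L * n / ((n:ℝ) - m)) ^ (T - K) - 1)) := by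
        gcongr
    _ = C * ((1 + η * L * n / ((n:ℝ) - m)) ^ (T - K) - 1) * (1 + η * L) ^ K := by
        ring
end
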